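/- arXiv:1903.07439 — 4 statements merged into one kernel-verified Lean document; each statement's English description precedes it below -/
import Mathlib

section
/- Let u(p) = p(1-p) and v(p) = p/2 - p^2/3 on [0,1]. Then for every p in (0,1], the supremum over p' in [p,1] of (u(p') - v(p))/(2p' - p) is attained only at p' = p, i.e., for all p' in (p,1], (u(p') - v(p))/(2p'-p) < (u(p)-v(p))/p. -/
theorem stmt_1 (u v : ℝ → ℝ)
    (hu : ∀ p, u p = p * (1 - p))
    (hv : ∀ p, v p = p / 2 - p ^ 2 / 3) :
    ∀ p ∈ Set.Ioc (0 : ℝ) 1, ∀ p' ∈ Set.Ioc p 1,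
      (u p' - v p) / (2 * p' - p) < (u p - v p) / p := by
  rintro p ⟨hp0, hp1⟩ p' ⟨hpp', hp'1⟩
  rw [hu, hu, hv]
  rw [div_lt_div_iff₀ (by linarith) hp0]
  nlinarith [mul_pos (sub_pos.2 hpp') (show (0:ℝ) < p' - p/3 by linarith)]
end

section
/- Fix p* in [0,1], μ > 0, q in (p*,1), and a function u twice differentiable in a neighborhood of q. Let φ be twice differentiable on [q,1] with φ'(p)(p - p*) = μ(u(p) - φ(p)) for p in [q,1]. If the function p ↦ μ(u(p) - φ(q))/(p - p* + μ(p - q)) attains its maximum over [q,1] at p = q, then φ''(q) ≤ 0. -/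
/-- If `f` has derivative `f'` at `q` and `f p ≤ f q` for all `p ∈ (q, b]` with `q < b`,
then `f' ≤ 0`. -/
lemma deriv_nonpos_of_max_right (f : ℝ → ℝ) (f' q b : ℝ) (hqb : q < b)
    (hf : HasDerivAt f f' q) (h0 : ∀ p ∈ Set.Ioc q b, f p ≤ f q) : f' ≤ 0 := by
  have htend : Filter.Tendsto (slope f q) (nhdsWithin q (Set.Ioi q)) (nhds f') :=
    (hasDerivAt_iff_tendsto_slope.1 hf).mono_left
      (nhdsWithin_mono _ (fun x hx => ne_of_gt hx))
  refine le_of_tendsto htend ?_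
  filter_upwards [Ioc_mem_nhdsGT_of_mem ⟨le_refl q, hqb⟩] with p hp
  have hpq : 0 < p - q := sub_pos.2 hp.1
  have : f p - f q ≤ 0 := sub_nonpos.2 (h0 p hp)
  simpa [slope_def_field, div_eq_mul_inv] using
    div_nonpos_of_nonpos_of_nonneg this hpq.le

theorem stmt_4 (pstar μ q ε : ℝ) (u u' u'' φ φ' φ'' : ℝ → ℝ)
    (hps : pstar ∈ Set.Icc (0 : ℝ) 1) (hμ : 0 < μ)
    (hq : q ∈ Set.Ioo pstar 1) (hε : 0 < ε)
    (hu' : ∀ p ∈ Set.Ioo (q - ε) (q + ε), HasDerivAt u (u' p) p)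
    (hu'' : ∀ p ∈ Set.Ioo (q - ε) (q + ε), HasDerivAt u' (u'' p) p)
    (hφ' : ∀ p ∈ Set.Icc q 1, HasDerivWithinAt φ (φ' p) (Set.Icc q 1) p)
    (hφ'' : ∀ p ∈ Set.Icc q 1, HasDerivWithinAt φ' (φ'' p) (Set.Icc q 1) p)
    (hode : ∀ p ∈ Set.Icc q 1, φ' p * (p - pstar) = μ * (u p - φ p))
    (hmax : ∀ p ∈ Set.Icc q 1,
      μ * (u p - φ q) / (p - pstar + μ * (p - q)) ≤
      μ * (u q - φ q) / (q - pstar)) :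
    φ'' q ≤ 0 := by
  obtain ⟨hq0, hq1⟩ := hq
  have hqmem : q ∈ Set.Icc q 1 := ⟨le_refl q, hq1.le⟩
  have hqε : q ∈ Set.Ioo (q - ε) (q + ε) := ⟨by linarith, by linarith⟩
  have hqps : 0 < q - pstar := sub_pos.2 hq0
  -- the ODE at q
  have hodeq : φ' q * (q - pstar) = μ * (u q - φ q) := hode q hqmem
  have hφ'q : μ * (u q - φ q) / (q - pstar) = φ' q := by
    rw [← hodeq]; field_simp
  -- Step A: differentiate the ODE at q (within Icc q 1)
  have hud : UniqueDiffWithinAt ℝ (Set.Icc q 1) q := (uniqueDiffOn_Icc hq1) q hqmem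
  have hF : HasDerivWithinAt (fun p => φ' p * (p - pstar))
      (φ'' q * (q - pstar) + φ' q * 1) (Set.Icc q 1) q :=
    (hφ'' q hqmem).mul (((hasDerivAt_id q).sub_const pstar).hasDerivWithinAt)
  have hG : HasDerivWithinAt (fun p => μ * (u p - φ p))
      (μ * (u' q - φ' q)) (Set.Icc q 1) q :=
    (((hu' q hqε).hasDerivWithinAt.sub (hφ' q hqmem)).const_mul μ)
  have hF2 : HasDerivWithinAt (fun p => φ' p * (p - pstar))
      (μ * (u' q - φ' q)) (Set.Icc q 1) q :=
    hG.congr (fun p hp => (hode p hp)) (hode q hqmem)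
  have key : φ'' q * (q - pstar) + φ' q * 1 = μ * (u' q - φ' q) := by
    have h1 := hF.derivWithin hud
    have h2 := hF2.derivWithin hud
    rw [← h1, ← h2]
  -- Step B: the maximality condition gives μ u'(q) ≤ (1+μ) φ'(q)
  set f : ℝ → ℝ := fun p => μ * (u p - φ q) - φ' q * (p - pstar + μ * (p - q)) with hf
  have hfq : f q = 0 := by simp only [hf]; rw [← hodeq]; ring
  have hfle : ∀ p ∈ Set.Ioc q 1, f p ≤ f q := by
    intro p hp
    have hD : 0 < p - pstar + μ * (p - q) := by
      have : 0 < p - q := sub_pos.2 hp.1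
      nlinarith
    have h := hmax p ⟨hp.1.le, hp.2⟩
    rw [hφ'q, div_le_iff₀ hD] at h
    rw [hfq]
    simp only [hf]
    linarith
  have hfderiv : HasDerivAt f (μ * u' q - φ' q * (1 + μ)) q := by
    have h1 : HasDerivAt (fun p => μ * (u p - φ q)) (μ * u' q) q :=
      ((hu' q hqε).sub_const (φ q)).const_mul μ
    have h2 : HasDerivAt (fun p => φ' q * (p - pstar + μ * (p - q)))
        (φ' q * (1 + μ)) q := by
      have := (((hasDerivAt_id q).sub_const pstar).add
        (((hasDerivAt_id q).sub_const q).const_mul μ)).const_mul (φ' q)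
      refine this.congr_deriv ?_
      ring
    exact h1.sub h2
  have hslope : μ * u' q - φ' q * (1 + μ) ≤ 0 :=
    deriv_nonpos_of_max_right f _ q 1 hq1 hfderiv hfle
  -- Combine
  nlinarith [key, hqps, hslope]
end

section
/- Let v : [0,1] → ℝ be concave, p* in [0,1), and suppose that for every q in (p*,1] the inequality μ(v(q) - u(q)) + v'_-(q)(q - p*) ≥ 0 holds, where u is continuous, μ > 0, and v'_- denotes the left derivative. If p in (p*,1) satisfies μ(v(p) - u(p)) + v'_-(p)(p - p*) = 0, then the left and right derivatives of v at p coincide: v'_-(p) = v'_+(p). -/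
open Set Filter

theorem stmt_7 (v u : ℝ → ℝ) (pstar μ p : ℝ)
    (hconc : ConcaveOn ℝ (Set.Icc 0 1) v)
    (hps : pstar ∈ Set.Ico (0 : ℝ) 1) (hμ : 0 < μ)
    (hucont : Continuous u)
    (hvcont : ContinuousOn v (Set.Icc 0 1))
    (hdiffL : ∀ q ∈ Set.Ioc pstar 1, DifferentiableWithinAt ℝ v (Set.Iic q) q)
    (hineq : ∀ q ∈ Set.Ioc pstar 1,
      μ * (v q - u q) + (derivWithin v (Set.Iic q) q) * (q - pstar) ≥ 0)
    (hp : p ∈ Set.Ioo pstar 1)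
    (hdiffR : DifferentiableWithinAt ℝ v (Set.Ici p) p)
    (heq : μ * (v p - u p) + (derivWithin v (Set.Iic p) p) * (p - pstar) = 0) :
    derivWithin v (Set.Iic p) p = derivWithin v (Set.Ici p) p := by
  set L := derivWithin v (Set.Iic p) p with hL
  set R := derivWithin v (Set.Ici p) p with hR
  have hp0 : (0 : ℝ) < p := lt_of_le_of_lt hps.1 hp.1
  have hp1 : p < 1 := hp.2
  have hpS : p ∈ Set.Icc (0 : ℝ) 1 := ⟨hp0.le, hp1.le⟩
  have hppos : 0 < p - pstar := sub_pos.mpr hp.1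
  -- R is the limit of slopes from the right
  have hRt : Filter.Tendsto (slope v p) (nhdsWithin p (Set.Ioi p)) (nhds R) := by
    have := (hasDerivWithinAt_iff_tendsto_slope (f := v) (f' := R)
      (s := Set.Ici p) (x := p)).mp hdiffR.hasDerivWithinAt
    simpa [Set.Ici_sdiff_left] using this
  -- L is the limit of slopes from the left
  have hdLp : DifferentiableWithinAt ℝ v (Set.Iic p) p := hdiffL p ⟨hp.1, hp1.le⟩
  have hLt : Filter.Tendsto (slope v p) (nhdsWithin p (Set.Iio p)) (nhds L) := by
    have := (hasDerivWithinAt_iff_tendsto_slope (f := v) (f' := L)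
      (s := Set.Iic p) (x := p)).mp hdLp.hasDerivWithinAt
    simpa [Set.Iic_diff_right] using this
  -- slope antitone
  have hanti := hconc.slope_anti (s := Set.Icc 0 1) hpS
  -- Step B : R ≤ L
  have hRL : R ≤ L := by
    have key : ∀ x ∈ Set.Ioo (0 : ℝ) p, R ≤ slope v p x := by
      intro x hx
      refine le_of_tendsto hRt ?_
      filter_upwards [Ioo_mem_nhdsGT_of_mem (Set.mem_Ico.mpr ⟨le_rfl, hp1⟩)] with q hq
      exact hanti ⟨⟨hx.1.le, (hx.2.trans hp1).le⟩, (ne_of_lt hx.2)⟩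
        ⟨⟨(hp0.trans hq.1).le, hq.2.le⟩, (ne_of_gt hq.1)⟩ (hx.2.trans hq.1).le
    refine ge_of_tendsto hLt ?_
    filter_upwards [Ioo_mem_nhdsLT_of_mem (Set.mem_Ioc.mpr ⟨hp0, le_rfl⟩)] with x hx
    exact key x hx
  -- Step A : L ≤ R
  have hLR : L ≤ R := by
    have key : ∀ q ∈ Set.Ioo p 1, 0 ≤ μ * (v q - u q) + R * (q - pstar) := by
      intro q hq
      have hqS : q ∈ Set.Icc (0 : ℝ) 1 := ⟨(hp0.trans hq.1).le, hq.2.le⟩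
      have hq' : q ∈ Set.Ioc pstar 1 := ⟨hp.1.trans hq.1, hq.2.le⟩
      have h1 : derivWithin v (Set.Iic q) q ≤ slope v p q :=
        hconc.le_slope_of_hasDerivWithinAt_Iio hpS hqS hq.1
          (((hdiffL q hq').hasDerivWithinAt).mono Set.Iio_subset_Iic_self)
      have h2 : slope v p q ≤ R :=
        hconc.slope_le_of_hasDerivWithinAt_Ioi hpS hqS hq.1
          (hdiffR.hasDerivWithinAt.mono Set.Ioi_subset_Ici_self)
      have h3 := hineq q hq'
      have hqpos : 0 < q - pstar := sub_pos.mpr hq'.1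
      nlinarith [mul_le_mul_of_nonneg_right (h1.trans h2) hqpos.le]
    have hcontv : ContinuousAt v p :=
      hvcont.continuousAt (Icc_mem_nhds hp0 hp1)
    have htend : Filter.Tendsto (fun q => μ * (v q - u q) + R * (q - pstar))
        (nhdsWithin p (Set.Ioi p)) (nhds (μ * (v p - u p) + R * (p - pstar))) := by
      apply Filter.Tendsto.mono_left _ nhdsWithin_le_nhds
      exact (((tendsto_const_nhds.mul (hcontv.tendsto.sub hucont.continuousAt.tendsto)).add
        (tendsto_const_nhds.mul ((continuous_id.sub continuous_const).tendsto p))))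
    have hlim : 0 ≤ μ * (v p - u p) + R * (p - pstar) := by
      refine ge_of_tendsto htend ?_
      filter_upwards [Ioo_mem_nhdsGT_of_mem (Set.mem_Ico.mpr ⟨le_rfl, hp1⟩)] with q hq
      exact key q hq
    nlinarith
  linarith
end

section
/- Let u(p) = (9p² - 9p + 2)/(6p - 3) for p ∈ [0,1/3] ∪ [2/3,1] and u(p) = 0 for p ∈ (1/3,2/3). Let p̄ = (√13 - 1)/6. Then the function v defined by v(p) = p - 2/3 on [0,1/3), v(p) = -1/(9p) on [1/3, p̄), and v(p) = -1/(9p̄) + (p - p̄)/(9p̄²) on [p̄,1], is continuous, concave, and differentiable on (0,1), and satisfies v'(p)·p = u(p) - v(p) for all p in (1/3, p̄). -/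
noncomputable def u10 (p : ℝ) : ℝ :=
  if p ≤ 1/3 then (9 * p ^ 2 - 9 * p + 2) / (6 * p - 3)
  else if p < 2/3 then 0
  else (9 * p ^ 2 - 9 * p + 2) / (6 * p - 3)

noncomputable def pbar10 : ℝ := (Real.sqrt 13 - 1) / 6

noncomputable def v10 (p : ℝ) : ℝ :=
  if p < 1/3 then p - 2/3
  else if p < pbar10 then -1 / (9 * p)
  else -1 / (9 * pbar10) + (p - pbar10) / (9 * pbar10 ^ 2)

lemma sqrt13_gt : 3 < Real.sqrt 13 := by
  rw [show (3:ℝ) = Real.sqrt 9 by rw [show (9:ℝ)=3^2 by norm_num, Real.sqrt_sq]; norm_num]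
  exact Real.sqrt_lt_sqrt (by norm_num) (by norm_num)

lemma sqrt13_lt : Real.sqrt 13 < 4 := by
  rw [show (4:ℝ) = Real.sqrt 16 by rw [show (16:ℝ)=4^2 by norm_num, Real.sqrt_sq]; norm_num]
  exact Real.sqrt_lt_sqrt (by norm_num) (by norm_num)

lemma pbar_gt : (1/3 : ℝ) < pbar10 := by
  have := sqrt13_gt; unfold pbar10; linarith

lemma pbar_lt : pbar10 < 1/2 := by
  have := sqrt13_lt; unfold pbar10; linarith

lemma pbar_pos : (0:ℝ) < pbar10 := lt_trans (by norm_num) pbar_gt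

/-- the three pieces -/
noncomputable def f10 (p : ℝ) : ℝ := p - 2/3
noncomputable def g10 (p : ℝ) : ℝ := -1 / (9 * p)
noncomputable def h10 (p : ℝ) : ℝ := -1 / (9 * pbar10) + (p - pbar10) / (9 * pbar10 ^ 2)

lemma v10_eq_f : ∀ p ∈ Set.Iic (1/3 : ℝ), v10 p = f10 p := by
  intro p hp
  rcases lt_or_eq_of_le (Set.mem_Iic.mp hp) with h | h
  · rw [v10, if_pos h, f10]
  · subst h
    rw [v10, if_neg (by norm_num), if_pos pbar_gt]
    norm_num [f10]

lemma v10_eq_g : ∀ p ∈ Set.Icc (1/3 : ℝ) pbar10, v10 p = g10 p := by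
  intro p hp
  rcases lt_or_eq_of_le hp.2 with h | h
  · rw [v10, if_neg (by push_neg; exact hp.1), if_pos h, g10]
  · subst h
    rw [v10, if_neg (by push_neg; exact hp.1), if_neg (lt_irrefl _), g10]
    have := pbar_pos
    field_simp
    norm_num

lemma v10_eq_h : ∀ p ∈ Set.Ici pbar10, v10 p = h10 p := by
  intro p hp
  have h1 : ¬ p < 1/3 := by push_neg; exact le_trans pbar_gt.le hp
  have h2 : ¬ p < pbar10 := by push_neg; exact hp
  rw [v10, if_neg h1, if_neg h2, h10]

lemma hasDerivAt_g {p : ℝ} (hp : p ≠ 0) : HasDerivAt g10 (1 / (9 * p ^ 2)) p := by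
  have h := (hasDerivAt_inv hp).const_mul (-1/9 : ℝ)
  have : g10 = fun x : ℝ => (-1/9) * x⁻¹ := by
    funext x
    rw [g10]
    rcases eq_or_ne x 0 with rfl | hx
    · simp
    · field_simp
  rw [this]
  exact h.congr_deriv (by field_simp)

lemma hasDerivAt_h (p : ℝ) : HasDerivAt h10 (1 / (9 * pbar10 ^ 2)) p := by
  have h : HasDerivAt (fun x : ℝ => -1 / (9 * pbar10) + (x - pbar10) / (9 * pbar10 ^ 2)) _ p :=
    (((hasDerivAt_id p).sub_const pbar10).div_const (9 * pbar10 ^ 2)).const_add (-1 / (9 * pbar10))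
  exact h

lemma hasDerivAt_f (p : ℝ) : HasDerivAt f10 1 p := (hasDerivAt_id p).sub_const _

noncomputable def phi10 (p : ℝ) : ℝ :=
  if p ≤ 1/3 then 1 else if p ≤ pbar10 then 1 / (9 * p ^ 2) else 1 / (9 * pbar10 ^ 2)

lemma v10_hasDerivAt : ∀ p ∈ Set.Ioo (0:ℝ) 1, HasDerivAt v10 (phi10 p) p := by
  intro p hp
  rcases lt_trichotomy p (1/3) with h1 | h1 | h1
  · -- left open piece
    have he : v10 =ᶠ[nhds p] f10 := by
      filter_upwards [Iio_mem_nhds h1] with x hx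
      exact v10_eq_f x (Set.mem_Iic.mpr hx.le)
    rw [phi10, if_pos h1.le]
    exact (hasDerivAt_f p).congr_of_eventuallyEq he
  · -- glue point 1/3
    subst h1
    have hdf : HasDerivWithinAt v10 1 (Set.Iic (1/3)) (1/3) :=
      ((hasDerivAt_f _).hasDerivWithinAt).congr v10_eq_f (v10_eq_f _ (Set.mem_Iic.mpr le_rfl))
    have hg : HasDerivWithinAt g10 (1 / (9 * (1/3:ℝ) ^ 2)) (Set.Icc (1/3) pbar10) (1/3) :=
      (hasDerivAt_g (by norm_num)).hasDerivWithinAt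
    have hdg : HasDerivWithinAt v10 (1 / (9 * (1/3:ℝ) ^ 2)) (Set.Icc (1/3) pbar10) (1/3) :=
      hg.congr v10_eq_g (v10_eq_g _ ⟨le_rfl, pbar_gt.le⟩)
    have hmem : Set.Icc (1/3 : ℝ) pbar10 ∈ nhdsWithin (1/3 : ℝ) (Set.Ici (1/3 : ℝ)) := by
      rw [← Set.Ici_inter_Iic]
      exact Filter.inter_mem self_mem_nhdsWithin
        (mem_nhdsWithin_of_mem_nhds (Iic_mem_nhds pbar_gt))
    have hdg' : HasDerivWithinAt v10 1 (Set.Ici (1/3)) (1/3) := by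
      have := hdg.mono_of_mem_nhdsWithin hmem
      exact this.congr_deriv (by norm_num)
    have := hdf.union hdg'
    rw [Set.Iic_union_Ici, hasDerivWithinAt_univ] at this
    rw [phi10, if_pos le_rfl]
    exact this
  · rcases lt_trichotomy p pbar10 with h2 | h2 | h2
    · -- middle open piece
      have he : v10 =ᶠ[nhds p] g10 := by
        filter_upwards [Ioo_mem_nhds h1 h2] with x hx
        exact v10_eq_g x ⟨hx.1.le, hx.2.le⟩
      rw [phi10, if_neg (by push_neg; exact h1), if_pos h2.le]
      exact (hasDerivAt_g (by positivity)).congr_of_eventuallyEq he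
    · -- glue point pbar
      subst h2
      have hg : HasDerivWithinAt g10 (1 / (9 * pbar10 ^ 2)) (Set.Icc (1/3) pbar10) pbar10 :=
        (hasDerivAt_g pbar_pos.ne').hasDerivWithinAt
      have hdg : HasDerivWithinAt v10 (1 / (9 * pbar10 ^ 2)) (Set.Icc (1/3) pbar10) pbar10 :=
        hg.congr v10_eq_g (v10_eq_g _ ⟨pbar_gt.le, le_rfl⟩)
      have hmem : Set.Icc (1/3 : ℝ) pbar10 ∈ nhdsWithin pbar10 (Set.Iic pbar10) := by
        rw [← Set.Ici_inter_Iic]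
        exact Filter.inter_mem (mem_nhdsWithin_of_mem_nhds (Ici_mem_nhds pbar_gt))
          self_mem_nhdsWithin
      have hdg' : HasDerivWithinAt v10 (1 / (9 * pbar10 ^ 2)) (Set.Iic pbar10) pbar10 :=
        hdg.mono_of_mem_nhdsWithin hmem
      have hdh : HasDerivWithinAt v10 (1 / (9 * pbar10 ^ 2)) (Set.Ici pbar10) pbar10 :=
        ((hasDerivAt_h _).hasDerivWithinAt).congr v10_eq_h (v10_eq_h _ (Set.mem_Ici.mpr le_rfl))
      have := hdg'.union hdh
      rw [Set.Iic_union_Ici, hasDerivWithinAt_univ] at this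
      rw [phi10, if_neg (by push_neg; exact h1), if_pos le_rfl]
      exact this
    · -- right open piece
      have he : v10 =ᶠ[nhds p] h10 := by
        filter_upwards [Ioi_mem_nhds h2] with x hx
        exact v10_eq_h x (Set.mem_Ici.mpr (le_of_lt hx))
      rw [phi10, if_neg (by push_neg; exact h1), if_neg (by push_neg; exact h2)]
      exact (hasDerivAt_h p).congr_of_eventuallyEq he

lemma phi10_antitone : AntitoneOn phi10 (Set.Ioo (0:ℝ) 1) := by
  intro x hx y hy hxy
  have hx0 := hx.1
  unfold phi10
  by_cases hy3 : y ≤ 1/3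
  · rw [if_pos hy3, if_pos (hxy.trans hy3)]
  · push_neg at hy3
    rw [if_neg (not_le.mpr hy3)]
    by_cases hyp : y ≤ pbar10
    · rw [if_pos hyp]
      by_cases hx3 : x ≤ 1/3
      · rw [if_pos hx3]
        have : (1:ℝ) ≤ 9 * y ^ 2 := by nlinarith
        rw [div_le_one (by nlinarith)]
        exact this
      · push_neg at hx3
        rw [if_neg (not_le.mpr hx3), if_pos (hxy.trans hyp)]
        apply div_le_div_of_nonneg_left (by norm_num) (by nlinarith) (by nlinarith)
    · push_neg at hyp
      rw [if_neg (not_le.mpr hyp)]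
      have hpb := pbar_gt
      by_cases hx3 : x ≤ 1/3
      · rw [if_pos hx3]
        have := pbar_pos
        rw [div_le_one (by nlinarith)]
        nlinarith
      · push_neg at hx3
        rw [if_neg (not_le.mpr hx3)]
        by_cases hxp : x ≤ pbar10
        · rw [if_pos hxp]
          apply div_le_div_of_nonneg_left (by norm_num) (by nlinarith) (by nlinarith)
        · rw [if_neg hxp]

lemma v10_continuousOn : ContinuousOn v10 (Set.Icc 0 1) := by
  intro x hx
  rcases eq_or_lt_of_le hx.1 with h0 | h0
  · -- x = 0
    subst h0
    have he : v10 =ᶠ[nhdsWithin 0 (Set.Icc 0 1)] f10 := by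
      filter_upwards [mem_nhdsWithin_of_mem_nhds (Iio_mem_nhds (by norm_num : (0:ℝ) < 1/3))]
        with z hz
      exact v10_eq_f z (Set.mem_Iic.mpr (le_of_lt hz))
    have hc : ContinuousWithinAt f10 (Set.Icc 0 1) 0 :=
      ((hasDerivAt_f 0).continuousAt).continuousWithinAt
    exact (hc.congr_of_eventuallyEq he (v10_eq_f 0 (by norm_num)))
  · rcases eq_or_lt_of_le hx.2 with h1 | h1
    · -- x = 1
      subst h1
      have he : v10 =ᶠ[nhdsWithin 1 (Set.Icc 0 1)] h10 := by
        filter_upwards [mem_nhdsWithin_of_mem_nhds (Ioi_mem_nhds (lt_trans pbar_lt (by norm_num)))]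
          with z hz
        exact v10_eq_h z (Set.mem_Ici.mpr (le_of_lt hz))
      have hc : ContinuousWithinAt h10 (Set.Icc 0 1) 1 :=
        ((hasDerivAt_h 1).continuousAt).continuousWithinAt
      exact (hc.congr_of_eventuallyEq he (v10_eq_h 1 (le_trans pbar_lt.le (by norm_num))))
    · exact ((v10_hasDerivAt x ⟨h0, h1⟩).differentiableAt.continuousAt).continuousWithinAt

theorem stmt_10 :
    ContinuousOn v10 (Set.Icc 0 1) ∧
    ConcaveOn ℝ (Set.Icc 0 1) v10 ∧
    (∀ p ∈ Set.Ioo (0 : ℝ) 1, DifferentiableAt ℝ v10 p) ∧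
    (∀ p ∈ Set.Ioo (1/3 : ℝ) pbar10, deriv v10 p * p = u10 p - v10 p) := by
  have hdiff : ∀ p ∈ Set.Ioo (0:ℝ) 1, DifferentiableAt ℝ v10 p :=
    fun p hp => (v10_hasDerivAt p hp).differentiableAt
  have hderiv : ∀ p ∈ Set.Ioo (0:ℝ) 1, deriv v10 p = phi10 p :=
    fun p hp => (v10_hasDerivAt p hp).deriv
  refine ⟨v10_continuousOn, ?_, hdiff, ?_⟩
  · apply AntitoneOn.concaveOn_of_deriv (convex_Icc 0 1) v10_continuousOn
    · rw [interior_Icc]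
      exact fun p hp => (hdiff p hp).differentiableWithinAt
    · rw [interior_Icc]
      intro a ha b hb hab
      rw [hderiv a ha, hderiv b hb]
      exact phi10_antitone ha hb hab
  · intro p hp
    have hp0 : (0:ℝ) < p := lt_trans (by norm_num) hp.1
    have hp1 : p < 1 := lt_trans hp.2 (lt_trans pbar_lt (by norm_num))
    rw [hderiv p ⟨hp0, hp1⟩, phi10, if_neg (not_le.mpr hp.1), if_pos hp.2.le]
    have hu : u10 p = 0 := by
      rw [u10, if_neg (not_le.mpr hp.1), if_pos (lt_trans hp.2 (lt_trans pbar_lt (by norm_num)))]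
    have hv : v10 p = -1 / (9 * p) := by
      rw [v10, if_neg (not_lt.mpr hp.1.le), if_pos hp.2]
    rw [hu, hv]
    field_simp
    ring
end
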